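/- Let F be the free commutative groupoid on one generator x, i.e., the quotient of the free magma on one generator by the smallest multiplicative congruence containing all pairs (u*v, v*u) for terms u, v. Define powers in F by x¹ = x and xⁿ⁺¹ = x·xⁿ. Then for every even m ≥ 4, xᵐ ≠ (x·x)^{m/2} in F. Consequently F, a magma satisfying the commutative law, is not mAC-nice for any even m ≥ 4. -/

import Mathlib

/-- Bracketings: full binary trees in which every internal node has two children. -/
inductive Brack : Type
  | leaf : Brack
  | node : Brack → Brack → Brack

/-- Number of leaves of a bracketing. -/
def Brack.leaves : Brack → ℕ
  | .leaf => 1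
  | .node l r => l.leaves + r.leaves

/-- The `s`-product in a magma `G`: evaluate the bracketing `s`, labelling its leaves
from left to right by `a k, a (k+1), …`. -/
def Brack.eval {G : Type*} [Mul G] : Brack → (ℕ → G) → ℕ → G
  | .leaf, a, k => a k
  | .node l r, a, k => l.eval a k * r.eval a (k + l.leaves)

/-- Extend a permutation of `{0, …, n−1}` to `ℕ` (identity elsewhere). -/
def permNat {n : ℕ} (f : Equiv.Perm (Fin n)) (i : ℕ) : ℕ :=
  if h : i < n then (f ⟨i, h⟩ : ℕ) else i

/-- A magma `G` satisfies the linear identity `⟨s, t, f⟩` if for all `a₁, …, aₙ ∈ G`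
the `s`-product of `(a₁, …, aₙ)` equals the `t`-product of `(a_{f(1)}, …, a_{f(n)})`. -/
def Satisfies (G : Type*) [Mul G] {n : ℕ} (s t : Brack) (f : Equiv.Perm (Fin n)) : Prop :=
  ∀ a : ℕ → G, s.eval a 0 = t.eval (fun i => a (permNat f i)) 0

/-- A magma `G` is `m`AC-nice if any two products of the same `m` elements coincide:
for every `a`, all bracketings `s, t` with `m` leaves and all permutations `f, g`,
the `s`-product of `(a_{f(1)}, …, a_{f(m)})` equals the `t`-product of
`(a_{g(1)}, …, a_{g(m)})`. -/
def ACnice (G : Type*) [Mul G] (m : ℕ) : Prop :=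
  ∀ (a : ℕ → G) (s t : Brack), s.leaves = m → t.leaves = m →
    ∀ f g : Equiv.Perm (Fin m),
      s.eval (fun i => a (permNat f i)) 0 = t.eval (fun i => a (permNat g i)) 0

/-- Instances of the commutative law in the free magma on one generator. -/
def commRel (x y : FreeMagma Unit) : Prop :=
  ∃ u v : FreeMagma Unit, x = u * v ∧ y = v * u

/-- The free commutative groupoid on one generator. -/
abbrev FC := (conGen commRel).Quotient

/-- The generator `x` of `FC`. -/
def xg : FC := Quotient.mk (conGen commRel).toSetoid (FreeMagma.of ())

/-- Powers: `x¹ = x`, `xⁿ⁺¹ = x · xⁿ` (the value at `0` is junk). -/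
def pw {G : Type*} [Mul G] (x : G) : ℕ → G
  | 0 => x
  | 1 => x
  | k + 2 => x * pw x (k + 1)

/-- A commutative magma tracking (size, min of sizes of the two top factors). -/
structure MM where
  sz : ℕ
  mn : ℕ
deriving DecidableEq

instance : Mul MM := ⟨fun a b => ⟨a.sz + b.sz, min a.sz b.sz⟩⟩

lemma MM.mul_def (a b : MM) : a * b = ⟨a.sz + b.sz, min a.sz b.sz⟩ := rfl

lemma MM.mul_comm (a b : MM) : a * b = b * a := by
  simp [MM.mul_def, Nat.add_comm, Nat.min_comm]

/-- Evaluation hom from the free magma to `MM`. -/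
def ev : FreeMagma Unit →ₙ* MM := FreeMagma.lift (fun _ => ⟨1, 0⟩)

lemma conGen_le_ker : conGen commRel ≤ Con.ker ev := by
  apply Con.conGen_le.2
  rintro x y ⟨u, v, rfl, rfl⟩
  show ev (u * v) = ev (v * u)
  rw [map_mul, map_mul]
  exact MM.mul_comm _ _

/-- The induced map on the quotient. -/
def evq : FC → MM := fun q => Con.liftOn q ev fun _ _ h => conGen_le_ker h

lemma evq_mul (a b : FC) : evq (a * b) = evq a * evq b := by
  induction a using Con.induction_on with
  | H a =>
  induction b using Con.induction_on with
  | H b => exact map_mul ev a b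

lemma evq_xg : evq xg = ⟨1, 0⟩ := rfl

lemma map_pw {G H : Type*} [Mul G] [Mul H] (f : G → H)
    (hf : ∀ a b, f (a * b) = f a * f b) (x : G) :
    ∀ n, f (pw x n) = pw (f x) n
  | 0 => rfl
  | 1 => rfl
  | (k + 2) => by rw [pw, hf, map_pw f hf x (k + 1)]; rfl

lemma pw_x : ∀ n, 2 ≤ n → pw (⟨1, 0⟩ : MM) n = ⟨n, 1⟩
  | 0, h => by omega
  | 1, h => by omega
  | 2, _ => rfl
  | (k + 3), _ => by
      rw [pw, pw_x (k + 2) (by omega)]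
      simp [MM.mul_def]
      omega

lemma pw_xx : ∀ n, 2 ≤ n → pw (⟨2, 1⟩ : MM) n = ⟨2 * n, 2⟩
  | 0, h => by omega
  | 1, h => by omega
  | 2, _ => rfl
  | (k + 3), _ => by
      rw [pw, pw_xx (k + 2) (by omega)]
      simp [MM.mul_def]
      omega

/-- Right comb with `n` leaves (for `n ≥ 1`). -/
def comb : ℕ → Brack
  | 0 => .leaf
  | 1 => .leaf
  | (k + 2) => .node .leaf (comb (k + 1))

lemma comb_leaves : ∀ n, 1 ≤ n → (comb n).leaves = n
  | 0, h => by omega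
  | 1, _ => rfl
  | (k + 2), _ => by
      show Brack.leaves _ + Brack.leaves _ = k + 2
      rw [comb_leaves (k + 1) (by omega)]
      show 1 + (k + 1) = k + 2
      omega

lemma comb_eval {G : Type*} [Mul G] (x : G) :
    ∀ n k, (comb n).eval (fun _ => x) k = pw x n
  | 0, k => rfl
  | 1, k => rfl
  | (n + 2), k => by
      show x * (comb (n + 1)).eval _ _ = _
      rw [comb_eval x (n + 1)]; rfl

/-- Right comb of pairs, `2n` leaves (for `n ≥ 1`). -/
def comb2 : ℕ → Brack
  | 0 => .node .leaf .leaf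
  | 1 => .node .leaf .leaf
  | (k + 2) => .node (.node .leaf .leaf) (comb2 (k + 1))

lemma comb2_leaves : ∀ n, 1 ≤ n → (comb2 n).leaves = 2 * n
  | 0, h => by omega
  | 1, _ => rfl
  | (k + 2), _ => by
      show Brack.leaves _ + Brack.leaves _ = 2 * (k + 2)
      rw [comb2_leaves (k + 1) (by omega)]
      show 1 + 1 + _ = _
      omega

lemma comb2_eval {G : Type*} [Mul G] (x : G) :
    ∀ n k, (comb2 n).eval (fun _ => x) k = pw (x * x) n
  | 0, k => rfl
  | 1, k => rfl
  | (n + 2), k => by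
      show (x * x) * (comb2 (n + 1)).eval _ _ = _
      rw [comb2_eval x (n + 1)]; rfl

/-- Lemma 5.3: in the free commutative groupoid on one generator `x`, for every even
`m ≥ 4` one has `xᵐ ≠ (x·x)^{m/2}`; consequently the free commutative groupoid is not
`m`AC-nice for any even `m ≥ 4` (so the commutative law is not ultimately AC-nice). -/
theorem stmt9 :
    (∀ m : ℕ, 4 ≤ m → Even m → pw xg m ≠ pw (xg * xg) (m / 2)) ∧
    (∀ m : ℕ, 4 ≤ m → Even m → ¬ACnice FC m) := by
  have key : ∀ m : ℕ, 4 ≤ m → Even m → pw xg m ≠ pw (xg * xg) (m / 2) := by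
    intro m hm hme h
    have h2 : evq (pw xg m) = evq (pw (xg * xg) (m / 2)) := by rw [h]
    obtain ⟨r, rfl⟩ := hme
    rw [map_pw evq evq_mul, map_pw evq evq_mul, evq_mul, evq_xg] at h2
    have e1 : ((⟨1,0⟩ : MM) * ⟨1,0⟩) = (⟨2,1⟩ : MM) := rfl
    rw [e1, pw_x _ (by omega), pw_xx _ (by omega)] at h2
    have := congrArg MM.mn h2
    simp at this
  refine ⟨key, fun m hm hme hnice => key m hm hme ?_⟩
  obtain ⟨r, hr⟩ := hme
  have h := hnice (fun _ => xg) (comb m) (comb2 (m / 2))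
    (comb_leaves m (by omega)) (by rw [comb2_leaves (m / 2) (by omega)]; omega)
    1 1
  simpa [comb_eval, comb2_eval] using h
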